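/- arXiv:2007.13636 — 3 statements merged into one kernel-verified Lean document; each statement's English description precedes it below -/
import Mathlib

section
/- Define the Callan polynomial C(n,k,x) := Σ_{j=0}^{min(n,k)} j! · (x+1)^{(j)} · S(n+1, j+1) · S(k+1, j+1), where S is the Stirling number of the second kind and (x+1)^{(j)} is the rising factorial. Then for all integers n ≥ 0 and m > k ≥ 0, Σ_{ℓ=0}^{m} (-1)^ℓ · c(m+1, ℓ+1) · C(n+ℓ, k, x) = 0 as a polynomial identity in x, where c denotes unsigned Stirling numbers of the first kind. -/
open Finset

/-- Stirling numbers of the second kind. -/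
def stirling2 : ℕ → ℕ → ℕ
  | 0, 0 => 1
  | 0, _ + 1 => 0
  | _ + 1, 0 => 0
  | n + 1, k + 1 => (k + 1) * stirling2 n (k + 1) + stirling2 n k

/-- Unsigned Stirling numbers of the first kind. -/
def stirling1 : ℕ → ℕ → ℕ
  | 0, 0 => 1
  | 0, _ + 1 => 0
  | _ + 1, 0 => 0
  | n + 1, k + 1 => n * stirling1 n (k + 1) + stirling1 n k

/-- The Callan polynomial, evaluated at x : ℚ. -/
def callan (n k : ℕ) (x : ℚ) : ℚ :=
  ∑ j ∈ Finset.range (min n k + 1),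
    (j.factorial : ℚ) * (∏ i ∈ Finset.range j, (x + 1 + i)) *
      stirling2 (n + 1) (j + 1) * stirling2 (k + 1) (j + 1)

lemma stirling2_eq_zero : ∀ n k : ℕ, n < k → stirling2 n k = 0 := by
  intro n
  induction n with
  | zero => intro k hk; cases k with
    | zero => omega
    | succ k => rfl
  | succ n ih =>
    intro k hk
    cases k with
    | zero => omega
    | succ k =>
      show (k + 1) * stirling2 n (k + 1) + stirling2 n k = 0
      rw [ih _ (by omega), ih _ (by omega)]
      simp

lemma stirling1_eq_zero : ∀ n k : ℕ, n < k → stirling1 n k = 0 := by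
  intro n
  induction n with
  | zero => intro k hk; cases k with
    | zero => omega
    | succ k => rfl
  | succ n ih =>
    intro k hk
    cases k with
    | zero => omega
    | succ k =>
      show n * stirling1 n (k + 1) + stirling1 n k = 0
      rw [ih _ (by omega), ih _ (by omega)]
      simp

lemma stirling1_prod (m : ℕ) (t : ℚ) :
    ∑ l ∈ range (m + 1), (-1 : ℚ) ^ l * stirling1 (m + 1) (l + 1) * t ^ l
      = ∏ i ∈ range m, ((i : ℚ) + 1 - t) := by
  induction m with
  | zero => simp [stirling1]
  | succ m ih =>
    have key : ∀ l : ℕ, (stirling1 (m + 2) (l + 1) : ℚ)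
        = (m + 1) * stirling1 (m + 1) (l + 1) + stirling1 (m + 1) l := by
      intro l
      show ((((m+1) * stirling1 (m+1) (l+1) + stirling1 (m+1) l : ℕ)) : ℚ) = _
      push_cast
      ring
    rw [prod_range_succ, ← ih]
    calc ∑ l ∈ range (m + 2), (-1 : ℚ) ^ l * stirling1 (m + 2) (l + 1) * t ^ l
        = ∑ l ∈ range (m + 2),
            (((m : ℚ) + 1) * ((-1 : ℚ) ^ l * stirling1 (m + 1) (l + 1) * t ^ l)
              + (-1 : ℚ) ^ l * stirling1 (m + 1) l * t ^ l) := by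
          refine sum_congr rfl fun l _ => ?_
          rw [key]
          ring
      _ = ((m : ℚ) + 1) * ∑ l ∈ range (m + 2),
            (-1 : ℚ) ^ l * stirling1 (m + 1) (l + 1) * t ^ l
          + ∑ l ∈ range (m + 2), (-1 : ℚ) ^ l * stirling1 (m + 1) l * t ^ l := by
          rw [sum_add_distrib, mul_sum]
      _ = ((m : ℚ) + 1) * ∑ l ∈ range (m + 1),
            (-1 : ℚ) ^ l * stirling1 (m + 1) (l + 1) * t ^ l
          + (-t) * ∑ l ∈ range (m + 1),
              (-1 : ℚ) ^ l * stirling1 (m + 1) (l + 1) * t ^ l := by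
          congr 1
          · rw [sum_range_succ, stirling1_eq_zero (m + 1) (m + 2) (by omega)]
            simp
          · rw [sum_range_succ', mul_sum]
            have h0 : stirling1 (m + 1) 0 = 0 := rfl
            rw [h0]
            simp only [Nat.cast_zero, mul_zero, zero_mul, add_zero]
            refine sum_congr rfl fun l _ => ?_
            rw [pow_succ, pow_succ]
            ring
      _ = (∑ l ∈ range (m + 1), (-1 : ℚ) ^ l * stirling1 (m + 1) (l + 1) * t ^ l)
            * ((m : ℚ) + 1 - t) := by ring

lemma choose_id (s i : ℕ) :
    ((i : ℚ)) * ((s + 1).choose i) = ((s : ℚ) + 1) * ((s + 1).choose i) - ((s : ℚ) + 1) * (s.choose i) := by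
  cases i with
  | zero => simp
  | succ t =>
    have h1 : (s + 1) * s.choose t = (s + 1).choose (t + 1) * (t + 1) :=
      Nat.add_one_mul_choose_eq s t
    have h2 : (s + 1).choose (t + 1) = s.choose t + s.choose (t + 1) :=
      Nat.choose_succ_succ s t
    have h1' : ((s : ℚ) + 1) * s.choose t = ((s + 1).choose (t + 1) : ℚ) * ((t : ℚ) + 1) := by
      exact_mod_cast congrArg (Nat.cast : ℕ → ℚ) h1
    have h2' : ((s + 1).choose (t + 1) : ℚ) = (s.choose t : ℚ) + (s.choose (t + 1) : ℚ) := by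
      exact_mod_cast congrArg (Nat.cast : ℕ → ℚ) h2
    push_cast
    nlinarith [h1', h2']

lemma T_eq : ∀ (N r : ℕ),
    ∑ i ∈ range (r + 1), (-1 : ℚ) ^ (r - i) * (r.choose i) * (i : ℚ) ^ N
      = (r.factorial : ℚ) * stirling2 N r := by
  intro N
  induction N with
  | zero =>
    intro r
    have hp : ((1 : ℚ) + (-1)) ^ r
        = ∑ i ∈ range (r + 1), (1 : ℚ) ^ i * (-1 : ℚ) ^ (r - i) * (r.choose i) :=
      add_pow 1 (-1) r
    cases r with
    | zero => simp [stirling2]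
    | succ s =>
      have hz : ((1 : ℚ) + (-1)) ^ (s + 1) = 0 := by norm_num
      rw [stirling2_eq_zero 0 (s + 1) (by omega)]
      simp only [Nat.cast_zero, mul_zero]
      rw [hz] at hp
      calc ∑ i ∈ range (s + 1 + 1), (-1 : ℚ) ^ (s + 1 - i) * ((s + 1).choose i) * (i : ℚ) ^ 0
          = ∑ i ∈ range (s + 1 + 1), (1 : ℚ) ^ i * (-1 : ℚ) ^ (s + 1 - i) * ((s + 1).choose i) :=
            sum_congr rfl fun i _ => by ring
        _ = 0 := hp.symm
  | succ N ih =>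
    intro r
    cases r with
    | zero =>
      simp [stirling2]
    | succ s =>
      have step1 : ∑ i ∈ range (s + 2), (-1 : ℚ) ^ (s + 1 - i) * ((s + 1).choose i) * (i : ℚ) ^ (N + 1)
          = ((s : ℚ) + 1) * (∑ i ∈ range (s + 2),
                (-1 : ℚ) ^ (s + 1 - i) * ((s + 1).choose i) * (i : ℚ) ^ N)
            - ((s : ℚ) + 1) * (∑ i ∈ range (s + 2),
                (-1 : ℚ) ^ (s + 1 - i) * (s.choose i) * (i : ℚ) ^ N) := by
        rw [mul_sum, mul_sum, ← sum_sub_distrib]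
        refine sum_congr rfl fun i _ => ?_
        have := choose_id s i
        calc (-1 : ℚ) ^ (s + 1 - i) * ((s + 1).choose i) * (i : ℚ) ^ (N + 1)
            = (-1 : ℚ) ^ (s + 1 - i) * ((i : ℚ) * ((s + 1).choose i)) * (i : ℚ) ^ N := by
              rw [pow_succ]; ring
          _ = (-1 : ℚ) ^ (s + 1 - i)
                * (((s : ℚ) + 1) * ((s + 1).choose i) - ((s : ℚ) + 1) * (s.choose i))
                * (i : ℚ) ^ N := by rw [this]
          _ = _ := by ring
      have step2 : ∑ i ∈ range (s + 2), (-1 : ℚ) ^ (s + 1 - i) * (s.choose i) * (i : ℚ) ^ N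
          = - ∑ i ∈ range (s + 1), (-1 : ℚ) ^ (s - i) * (s.choose i) * (i : ℚ) ^ N := by
        rw [sum_range_succ, Nat.choose_succ_self]
        simp only [Nat.cast_zero, mul_zero, zero_mul, add_zero]
        rw [← Finset.sum_neg_distrib]
        refine sum_congr rfl fun i hi => ?_
        have hle : i ≤ s := by simpa [Nat.lt_succ_iff] using hi
        have : s + 1 - i = (s - i) + 1 := by omega
        rw [this, pow_succ]
        ring
      rw [step1, step2, ih (s + 1), ih s]
      have hs2 : (stirling2 (N + 1) (s + 1) : ℚ)
          = ((s : ℚ) + 1) * stirling2 N (s + 1) + stirling2 N s := by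
        show (((s + 1) * stirling2 N (s + 1) + stirling2 N s : ℕ) : ℚ) = _
        push_cast
        ring
      rw [hs2]
      have hfac : ((s + 1).factorial : ℚ) = ((s : ℚ) + 1) * (s.factorial : ℚ) := by
        rw [Nat.factorial_succ]
        push_cast
        ring
      rw [hfac]
      ring

lemma keyD (n m j : ℕ) (hj : j < m) :
    ∑ l ∈ range (m + 1),
      (-1 : ℚ) ^ l * stirling1 (m + 1) (l + 1) * stirling2 (n + l + 1) (j + 1) = 0 := by
  have hfac : (((j + 1).factorial : ℚ)) ≠ 0 := by
    exact_mod_cast Nat.factorial_ne_zero (j + 1)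
  have h : ((j + 1).factorial : ℚ) * ∑ l ∈ range (m + 1),
      (-1 : ℚ) ^ l * stirling1 (m + 1) (l + 1) * stirling2 (n + l + 1) (j + 1) = 0 := by
    rw [mul_sum]
    have hT : ∀ l, ((j + 1).factorial : ℚ)
        * ((-1 : ℚ) ^ l * stirling1 (m + 1) (l + 1) * stirling2 (n + l + 1) (j + 1))
        = ∑ i ∈ range (j + 2),
            (-1 : ℚ) ^ l * stirling1 (m + 1) (l + 1)
              * ((-1 : ℚ) ^ (j + 1 - i) * ((j + 1).choose i) * (i : ℚ) ^ (n + l + 1)) := by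
      intro l
      rw [← mul_sum, T_eq (n + l + 1) (j + 1)]
      ring
    calc ∑ l ∈ range (m + 1), ((j + 1).factorial : ℚ)
            * ((-1 : ℚ) ^ l * stirling1 (m + 1) (l + 1) * stirling2 (n + l + 1) (j + 1))
        = ∑ l ∈ range (m + 1), ∑ i ∈ range (j + 2),
            (-1 : ℚ) ^ l * stirling1 (m + 1) (l + 1)
              * ((-1 : ℚ) ^ (j + 1 - i) * ((j + 1).choose i) * (i : ℚ) ^ (n + l + 1)) := by
          exact sum_congr rfl fun l _ => hT l
      _ = ∑ i ∈ range (j + 2), ∑ l ∈ range (m + 1),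
            (-1 : ℚ) ^ l * stirling1 (m + 1) (l + 1)
              * ((-1 : ℚ) ^ (j + 1 - i) * ((j + 1).choose i) * (i : ℚ) ^ (n + l + 1)) :=
          sum_comm
      _ = 0 := by
          refine sum_eq_zero fun i hi => ?_
          cases i with
          | zero =>
            refine sum_eq_zero fun l _ => ?_
            simp
          | succ u =>
            have hium : u < m := by
              have : u + 1 < j + 2 := mem_range.mp hi
              omega
            have hfactor : ∑ l ∈ range (m + 1),
                (-1 : ℚ) ^ l * stirling1 (m + 1) (l + 1)
                  * ((-1 : ℚ) ^ (j + 1 - (u + 1)) * ((j + 1).choose (u + 1))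
                      * ((u + 1 : ℕ) : ℚ) ^ (n + l + 1))
                = ((-1 : ℚ) ^ (j + 1 - (u + 1)) * ((j + 1).choose (u + 1))
                    * ((u + 1 : ℕ) : ℚ) ^ (n + 1))
                  * ∑ l ∈ range (m + 1),
                      (-1 : ℚ) ^ l * stirling1 (m + 1) (l + 1) * ((u + 1 : ℕ) : ℚ) ^ l := by
              rw [mul_sum]
              refine sum_congr rfl fun l _ => ?_
              have : n + l + 1 = (n + 1) + l := by omega
              rw [this, pow_add]
              ring
            rw [hfactor, stirling1_prod m ((u + 1 : ℕ) : ℚ)]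
            have hz : ∏ i ∈ range m, ((i : ℚ) + 1 - ((u + 1 : ℕ) : ℚ)) = 0 := by
              refine prod_eq_zero (mem_range.mpr hium) ?_
              push_cast
              ring
            rw [hz, mul_zero]
  exact (mul_eq_zero.mp h).resolve_left hfac

theorem stmt4 (n k m : ℕ) (hk : k < m) (x : ℚ) :
    ∑ l ∈ Finset.range (m + 1),
      (-1 : ℚ) ^ l * stirling1 (m + 1) (l + 1) * callan (n + l) k x = 0 := by
  have hcal : ∀ l, callan (n + l) k x
      = ∑ j ∈ range (k + 1), (j.factorial : ℚ) * (∏ i ∈ range j, (x + 1 + i)) *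
          stirling2 (n + l + 1) (j + 1) * stirling2 (k + 1) (j + 1) := by
    intro l
    unfold callan
    refine sum_subset (range_subset_range.mpr (by omega)) ?_
    intro j hj hj2
    rw [mem_range] at hj
    rw [mem_range] at hj2
    have : n + l + 1 < j + 1 := by omega
    rw [stirling2_eq_zero _ _ this]
    simp
  calc ∑ l ∈ range (m + 1), (-1 : ℚ) ^ l * stirling1 (m + 1) (l + 1) * callan (n + l) k x
      = ∑ l ∈ range (m + 1), ∑ j ∈ range (k + 1),
          (-1 : ℚ) ^ l * stirling1 (m + 1) (l + 1) *
            ((j.factorial : ℚ) * (∏ i ∈ range j, (x + 1 + i)) *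
              stirling2 (n + l + 1) (j + 1) * stirling2 (k + 1) (j + 1)) := by
        refine sum_congr rfl fun l _ => ?_
        rw [hcal l, mul_sum]
    _ = ∑ j ∈ range (k + 1), ∑ l ∈ range (m + 1),
          (-1 : ℚ) ^ l * stirling1 (m + 1) (l + 1) *
            ((j.factorial : ℚ) * (∏ i ∈ range j, (x + 1 + i)) *
              stirling2 (n + l + 1) (j + 1) * stirling2 (k + 1) (j + 1)) := sum_comm
    _ = 0 := by
        refine sum_eq_zero fun j hj => ?_
        have hjm : j < m := by
          have := mem_range.mp hj
          omega
        have : ∑ l ∈ range (m + 1),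
            (-1 : ℚ) ^ l * stirling1 (m + 1) (l + 1) *
              ((j.factorial : ℚ) * (∏ i ∈ range j, (x + 1 + i)) *
                stirling2 (n + l + 1) (j + 1) * stirling2 (k + 1) (j + 1))
            = ((j.factorial : ℚ) * (∏ i ∈ range j, (x + 1 + i)) * stirling2 (k + 1) (j + 1))
              * ∑ l ∈ range (m + 1),
                  (-1 : ℚ) ^ l * stirling1 (m + 1) (l + 1) * stirling2 (n + l + 1) (j + 1) := by
          rw [mul_sum]
          refine sum_congr rfl fun l _ => ?_
          ring
        rw [this, keyD n m j hjm, mul_zero]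
end

section
/- For all integers k ≥ j ≥ 0, Σ_{ℓ=j}^{k} (-1)^{ℓ+j} · c(k+2, ℓ+2) · S(ℓ+1, j+1) = (k+1)! / (j+1)!, where c is the unsigned Stirling number of the first kind and S is the Stirling number of the second kind. -/
open Finset

lemma s1_zero : ∀ n m, n < m → stirling1 n m = 0 := by
  intro n
  induction n with
  | zero => intro m h; cases m with
    | zero => omega
    | succ m => rfl
  | succ n ih =>
    intro m h
    cases m with
    | zero => omega
    | succ m => simp [stirling1, ih (m+1) (by omega), ih m (by omega)]

lemma s2_zero : ∀ n m, n < m → stirling2 n m = 0 := by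
  intro n
  induction n with
  | zero => intro m h; cases m with
    | zero => omega
    | succ m => rfl
  | succ n ih =>
    intro m h
    cases m with
    | zero => omega
    | succ m => simp [stirling2, ih (m+1) (by omega), ih m (by omega)]

lemma s1_diag : ∀ n, stirling1 n n = 1 := by
  intro n
  induction n with
  | zero => rfl
  | succ n ih => simp [stirling1, ih, s1_zero n (n+1) (by omega)]

lemma s2_diag : ∀ n, stirling2 n n = 1 := by
  intro n
  induction n with
  | zero => rfl
  | succ n ih => simp [stirling2, ih, s2_zero n (n+1) (by omega)]

lemma sum_shift (f : ℕ → ℚ) (a b : ℕ) :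
    ∑ m ∈ Icc (a+1) (b+1), f m = ∑ l ∈ Icc a b, f (l+1) := by
  rw [← Finset.map_add_right_Icc a b 1, Finset.sum_map]
  rfl

lemma orth : ∀ n p, p ≤ n →
    (∑ m ∈ Icc p n, (-1:ℚ)^(m+p) * stirling1 n m * stirling2 m p)
      = if n = p then 1 else 0 := by
  intro n
  induction n with
  | zero =>
    intro p hp
    interval_cases p
    simp [stirling1, stirling2]
  | succ n ih =>
    intro p hp
    cases p with
    | zero =>
      rw [if_neg (by omega)]
      apply Finset.sum_eq_zero
      intro m _
      rcases Nat.eq_zero_or_pos m with h | h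
      · subst h; simp [stirling1]
      · obtain ⟨m', rfl⟩ : ∃ m', m = m' + 1 := ⟨m - 1, by omega⟩
        simp [show stirling2 (m'+1) 0 = 0 from rfl]
    | succ q =>
      -- reindex: sum over Icc (q+1) (n+1) of f m = sum over Icc q n of f (l+1)
      rw [sum_shift (fun m => (-1:ℚ)^(m+(q+1)) * stirling1 (n+1) m * stirling2 m (q+1)) q n]
      rcases eq_or_lt_of_le (Nat.succ_le_succ_iff.mp hp) with hq | hq
      · -- q = n
        subst hq
        simp only [Finset.Icc_self, Finset.sum_singleton, s1_diag, s2_diag,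
          Nat.cast_one, mul_one, if_pos rfl]
        rw [show q+1+(q+1) = 2*(q+1) by omega, pow_mul]
        norm_num
      · -- q < n
        rw [if_neg (by omega)]
        have expand : ∀ l ∈ Icc q n,
            (-1:ℚ)^(l+1+(q+1)) * stirling1 (n+1) (l+1) * stirling2 (l+1) (q+1)
            = (n:ℚ) * ((-1)^(l+q) * stirling1 n (l+1) * stirling2 (l+1) (q+1))
              + ((q+1) * ((-1)^(l+q) * stirling1 n l * stirling2 l (q+1))
                 + (-1)^(l+q) * stirling1 n l * stirling2 l q) := by
          intro l _
          have h1 : stirling1 (n+1) (l+1) = n * stirling1 n (l+1) + stirling1 n l := rfl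
          have h2 : stirling2 (l+1) (q+1) = (q+1) * stirling2 l (q+1) + stirling2 l q := rfl
          rw [h1, h2]
          push_cast
          have : (-1:ℚ)^(l+1+(q+1)) = (-1)^(l+q) := by
            rw [show l+1+(q+1) = (l+q)+2 by omega, pow_add]; norm_num
          rw [this]; ring
        rw [Finset.sum_congr rfl expand, Finset.sum_add_distrib, Finset.sum_add_distrib,
          ← Finset.mul_sum, ← Finset.mul_sum]
        -- Part A : ∑ l ∈ Icc q n, (-1)^(l+q) c(n,l+1) S2(l+1,q+1)
        have hA : (∑ l ∈ Icc q n, (-1:ℚ)^(l+q) * stirling1 n (l+1) * stirling2 (l+1) (q+1))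
            = if n = q + 1 then 1 else 0 := by
          obtain ⟨n', rfl⟩ : ∃ n', n = n' + 1 := ⟨n - 1, by omega⟩
          rw [Finset.sum_Icc_succ_top (by omega : q ≤ n' + 1)]
          rw [s1_zero (n'+1) (n'+2) (by omega)]
          have := ih (q+1) (by omega)
          rw [sum_shift (fun m => (-1:ℚ)^(m+(q+1)) * stirling1 (n'+1) m * stirling2 m (q+1)) q n'] at this
          rw [← this]
          simp only [Nat.cast_zero, mul_zero, zero_mul, add_zero]
          apply Finset.sum_congr rfl
          intro l _
          have : (-1:ℚ)^(l+1+(q+1)) = (-1)^(l+q) := by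
            rw [show l+1+(q+1) = (l+q)+2 by omega, pow_add]; norm_num
          rw [this]
        -- Part C : ∑ l ∈ Icc q n, (-1)^(l+q) c(n,l) S2(l,q+1) = - (if n = q+1 ...)
        have hC : (∑ l ∈ Icc q n, (-1:ℚ)^(l+q) * stirling1 n l * stirling2 l (q+1))
            = -(if n = q + 1 then 1 else 0) := by
          rw [← Finset.Ioc_insert_left (by omega : q ≤ n), Finset.sum_insert (by simp)]
          rw [s2_zero q (q+1) (by omega)]
          rw [← Finset.Icc_add_one_left_eq_Ioc]
          have := ih (q+1) (by omega)
          rw [← this]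
          simp only [Nat.cast_zero, mul_zero, zero_add]
          rw [← Finset.sum_neg_distrib]
          apply Finset.sum_congr rfl
          intro l _
          have : (-1:ℚ)^(l+(q+1)) = -(-1)^(l+q) := by
            rw [show l+(q+1) = (l+q)+1 by omega, pow_succ]; ring
          rw [this]; ring
        -- Part D : orthogonality at (n, q)
        have hD : (∑ l ∈ Icc q n, (-1:ℚ)^(l+q) * stirling1 n l * stirling2 l q) = 0 := by
          rw [ih q (by omega), if_neg (by omega)]
        rw [hA, hC, hD]
        rcases eq_or_ne n (q+1) with h|h
        · subst h; simp only [if_pos rfl]; push_cast; ring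
        · simp only [if_neg h]; ring

lemma main_lemma : ∀ k j, j ≤ k →
    ∑ l ∈ Finset.Icc j k,
        (-1 : ℚ) ^ (l + j) * stirling1 (k + 2) (l + 2) * stirling2 (l + 1) (j + 1) =
      ((k + 1).factorial : ℚ) / (j + 1).factorial := by
  intro k
  induction k with
  | zero =>
    intro j hj
    interval_cases j
    norm_num [stirling1, stirling2]
  | succ k ih =>
    intro j hj
    rcases eq_or_lt_of_le hj with hj' | hj'
    · -- j = k+1 : single term
      subst hj'
      simp only [Finset.Icc_self, Finset.sum_singleton, s1_diag, s2_diag,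
        Nat.cast_one, mul_one]
      rw [show (k+1)+(k+1) = 2*(k+1) by omega, pow_mul,
        div_self (by exact_mod_cast (Nat.factorial_ne_zero (k+1+1)))]
      norm_num
    · -- j ≤ k
      have hjk : j ≤ k := by omega
      have expand : ∀ l ∈ Icc j (k+1),
          (-1:ℚ)^(l+j) * stirling1 (k+1+2) (l+2) * stirling2 (l+1) (j+1)
          = ((k:ℚ)+2) * ((-1)^(l+j) * stirling1 (k+2) (l+2) * stirling2 (l+1) (j+1))
            + (-1)^(l+j) * stirling1 (k+2) (l+1) * stirling2 (l+1) (j+1) := by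
        intro l _
        have h1 : stirling1 (k+3) (l+2) = (k+2) * stirling1 (k+2) (l+2) + stirling1 (k+2) (l+1) := rfl
        rw [show k+1+2 = k+3 from rfl, h1]
        push_cast
        ring
      rw [Finset.sum_congr rfl expand, Finset.sum_add_distrib, ← Finset.mul_sum]
      have hA : (∑ l ∈ Icc j (k+1), (-1:ℚ)^(l+j) * stirling1 (k+2) (l+2) * stirling2 (l+1) (j+1))
          = ((k + 1).factorial : ℚ) / (j + 1).factorial := by
        rw [Finset.sum_Icc_succ_top (by omega : j ≤ k + 1),
          s1_zero (k+2) (k+1+2) (by omega)]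
        rw [ih j hjk]
        norm_num
      have hB : (∑ l ∈ Icc j (k+1), (-1:ℚ)^(l+j) * stirling1 (k+2) (l+1) * stirling2 (l+1) (j+1)) = 0 := by
        have := orth (k+2) (j+1) (by omega)
        rw [sum_shift (fun m => (-1:ℚ)^(m+(j+1)) * stirling1 (k+2) m * stirling2 m (j+1)) j (k+1),
          if_neg (by omega)] at this
        rw [← this]
        apply Finset.sum_congr rfl
        intro l _
        have : (-1:ℚ)^(l+1+(j+1)) = (-1)^(l+j) := by
          rw [show l+1+(j+1) = (l+j)+2 by omega, pow_add]; norm_num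
        rw [this]
      rw [hA, hB, add_zero]
      have hf : ((k + 1 + 1).factorial : ℚ) = (k+2) * (k+1).factorial := by
        rw [Nat.factorial_succ]; push_cast; ring
      rw [hf]
      ring


theorem stmt11 (k j : ℕ) (hj : j ≤ k) :
    ∑ l ∈ Finset.Icc j k,
        (-1 : ℚ) ^ (l + j) * stirling1 (k + 2) (l + 2) * stirling2 (l + 1) (j + 1) =
      ((k + 1).factorial : ℚ) / (j + 1).factorial := by
  exact main_lemma k j hj
end

section
/- Define C(n,k,x) := Σ_{j=0}^{min(n,k)} j! · (x+1)^{(j)} · S(n+1, j+1) · S(k+1, j+1) with C(n,0,x) = C(0,k,x) = 1. Then for all integers n ≥ 0 and k > 0, C(n,k,x) = (n+1)·C(n,k-1,x) + Σ_{j=1}^{n-1} binom(n, j-1)·C(j, k-1, x) + x·Σ_{j=0}^{n-1} binom(n, j)·C(j, k-1, x), as polynomials in x. -/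
open Finset

lemma s2_succ_succ (n k : ℕ) :
    stirling2 (n + 1) (k + 1) = (k + 1) * stirling2 n (k + 1) + stirling2 n k := rfl

lemma s2_zero_right (n : ℕ) : stirling2 (n + 1) 0 = 0 := rfl

lemma s2_eq_zero : ∀ n k, n < k → stirling2 n k = 0 := by
  intro n
  induction n with
  | zero => intro k hk; cases k with
    | zero => omega
    | succ k => rfl
  | succ n ih =>
    intro k hk
    cases k with
    | zero => omega
    | succ k =>
      rw [s2_succ_succ, ih (k+1) (by omega), ih k (by omega)]; simp

lemma s2_one (k : ℕ) : stirling2 (k + 1) 1 = 1 := by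
  induction k with
  | zero => rfl
  | succ k ih => rw [s2_succ_succ, ih, s2_zero_right]

lemma s2_binom (n : ℕ) : ∀ c, stirling2 (n + 1) (c + 1) = ∑ j ∈ range (n + 1), n.choose j * stirling2 j c := by
  induction n with
  | zero =>
    intro c
    cases c <;> simp [stirling2]
  | succ n ih =>
    intro c
    cases c with
    | zero =>
      rw [s2_one]
      rw [Finset.sum_range_succ']
      simp [stirling2, s2_zero_right]
    | succ c =>
      rw [Finset.sum_range_succ']
      have h0 : (n+1).choose 0 * stirling2 0 (c+1) = 0 := by simp [stirling2]
      rw [h0, add_zero]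
      have hterm : ∀ i, (n+1).choose (i+1) * stirling2 (i+1) (c+1)
          = (c+1) * (n.choose i * stirling2 i (c+1)) + n.choose i * stirling2 i c
            + n.choose (i+1) * stirling2 (i+1) (c+1) := by
        intro i
        rw [Nat.choose_succ_succ, s2_succ_succ]
        ring
      rw [Finset.sum_congr rfl (fun i _ => hterm i)]
      rw [Finset.sum_add_distrib, Finset.sum_add_distrib, ← Finset.mul_sum]
      have h3 : ∑ i ∈ range (n+1), n.choose (i+1) * stirling2 (i+1) (c+1)
          = stirling2 (n+1) (c+2) := by
        have h1 : ∑ j ∈ range (n+2), n.choose j * stirling2 j (c+1)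
            = ∑ i ∈ range (n+1), n.choose (i+1) * stirling2 (i+1) (c+1)
              + n.choose 0 * stirling2 0 (c+1) := Finset.sum_range_succ' _ _
        have h2 : ∑ j ∈ range (n+2), n.choose j * stirling2 j (c+1)
            = ∑ j ∈ range (n+1), n.choose j * stirling2 j (c+1)
              + n.choose (n+1) * stirling2 (n+1) (c+1) := Finset.sum_range_succ _ _
        rw [Nat.choose_succ_self, ← ih (c+1)] at h2
        have h4 : stirling2 0 (c+1) = 0 := rfl
        rw [h4, Nat.mul_zero, Nat.add_zero, h2] at h1
        simpa using h1.symm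
      rw [h3, ← ih c, ← ih (c+1), s2_succ_succ]
      ring

lemma s2_binom' (n m : ℕ) :
    ∑ j ∈ range (n + 1), n.choose j * stirling2 (j + 1) m
      = m * stirling2 (n + 1) (m + 1) + stirling2 (n + 1) m := by
  cases m with
  | zero =>
    have : ∀ j, stirling2 (j + 1) 0 = 0 := fun j => rfl
    simp [this]
  | succ m =>
    have hterm : ∀ j, n.choose j * stirling2 (j + 1) (m + 1)
        = (m + 1) * (n.choose j * stirling2 j (m + 1)) + n.choose j * stirling2 j m := by
      intro j; rw [s2_succ_succ]; ring
    rw [Finset.sum_congr rfl (fun j _ => hterm j), Finset.sum_add_distrib, ← Finset.mul_sum,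
      ← s2_binom, ← s2_binom]

lemma keyE (N m : ℕ) (x : ℚ) :
    ((m+1).factorial : ℚ) * (∏ i ∈ range m, (x+1+i)) * stirling2 (N+2) (m+1)
      + ((m+1).factorial : ℚ) * (∏ i ∈ range (m+1), (x+1+i)) * stirling2 (N+2) (m+2)
    = (m.factorial : ℚ) * (∏ i ∈ range m, (x+1+i)) *
        (((N:ℚ)+2) * stirling2 (N+2) (m+1)
          + ∑ j ∈ Icc 1 N, ((N+1).choose (j-1) : ℚ) * stirling2 (j+1) (m+1)
          + x * ∑ j ∈ range (N+1), ((N+1).choose j : ℚ) * stirling2 (j+1) (m+1)) := by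
  -- Σ2
  have hA : ∑ j ∈ range (N+1), (N+1).choose j * stirling2 (j+1) (m+1)
      + stirling2 (N+2) (m+1)
      = (m+1) * stirling2 (N+2) (m+2) + stirling2 (N+2) (m+1) := by
    have h := s2_binom' (N+1) (m+1)
    rw [Finset.sum_range_succ, Nat.choose_self, one_mul] at h
    exact h
  have hs2Q : (∑ j ∈ range (N+1), ((N+1).choose j : ℚ) * stirling2 (j+1) (m+1))
      = ((m:ℚ)+1) * stirling2 (N+2) (m+2) := by
    have h2 := congrArg (fun t : ℕ => (t : ℚ)) hA
    push_cast at h2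
    linarith
  -- W1, W0
  have hW : ∀ c, (∑ i ∈ range N, ((N+1).choose i : ℚ) * stirling2 (i+1) c)
      = (c:ℚ) * stirling2 (N+2) (c+1) - ((N:ℚ)+1) * stirling2 (N+1) c := by
    intro c
    have h := s2_binom' (N+1) c
    rw [Finset.sum_range_succ, Finset.sum_range_succ, Nat.choose_self, one_mul,
      Nat.choose_succ_self_right] at h
    have h2 := congrArg (fun t : ℕ => (t : ℚ)) h
    push_cast at h2
    linarith
  -- Σ1
  have hS1 : (∑ j ∈ Icc 1 N, ((N+1).choose (j-1) : ℚ) * stirling2 (j+1) (m+1))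
      = ∑ i ∈ range N, ((N+1).choose i : ℚ) *
          (((m:ℚ)+1) * stirling2 (i+1) (m+1) + stirling2 (i+1) m) := by
    rw [← Finset.Ico_add_one_right_eq_Icc, Finset.sum_Ico_eq_sum_range]
    apply Finset.sum_congr (by norm_num)
    intro i _
    have h1 : (1 + i) - 1 = i := by omega
    have h2 : stirling2 (1 + i + 1) (m+1) = (m+1) * stirling2 (i+1) (m+1) + stirling2 (i+1) m := by
      rw [show 1 + i + 1 = (i+1) + 1 from by omega, s2_succ_succ]
    rw [h1, h2]
    push_cast
    ring
  have hS1' : (∑ j ∈ Icc 1 N, ((N+1).choose (j-1) : ℚ) * stirling2 (j+1) (m+1))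
      = ((m:ℚ)+1) * (∑ i ∈ range N, ((N+1).choose i : ℚ) * stirling2 (i+1) (m+1))
        + ∑ i ∈ range N, ((N+1).choose i : ℚ) * stirling2 (i+1) m := by
    rw [hS1, Finset.mul_sum, ← Finset.sum_add_distrib]
    apply Finset.sum_congr rfl
    intro i _
    ring
  rw [hS1', hW (m+1), hW m, hs2Q]
  have hrecQ : (stirling2 (N+2) (m+1) : ℚ)
      = ((m:ℚ)+1) * stirling2 (N+1) (m+1) + stirling2 (N+1) m := by
    rw [show (N+2) = (N+1)+1 from rfl, s2_succ_succ]
    push_cast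
    ring
  have hfac : ((m+1).factorial : ℚ) = ((m:ℚ)+1) * m.factorial := by
    rw [Nat.factorial_succ]; push_cast; ring
  have hprod : (∏ i ∈ range (m+1), (x+1+(i:ℚ))) = (∏ i ∈ range m, (x+1+(i:ℚ))) * (x+1+m) :=
    Finset.prod_range_succ _ _
  rw [hfac, hprod]
  push_cast
  push_cast at hrecQ
  linear_combination (-(m.factorial : ℚ) * (∏ i ∈ range m, (x+1+(i:ℚ))) * ((N:ℚ)+1)) * hrecQ

lemma callan_eq (n k M : ℕ) (x : ℚ) (h : n + 2 ≤ M) :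
    callan n k x = ∑ j ∈ range M,
      (j.factorial : ℚ) * (∏ i ∈ Finset.range j, (x + 1 + i)) *
        stirling2 (n + 1) (j + 1) * stirling2 (k + 1) (j + 1) := by
  unfold callan
  apply Finset.sum_subset
  · apply Finset.range_subset_range.mpr
    have := Nat.min_le_left n k
    omega
  · intro j hj hnj
    simp only [Finset.mem_range] at hj hnj
    have : n < j ∨ k < j := by
      rcases Nat.le_total n k with h' | h' <;> simp [Nat.min_eq_left, Nat.min_eq_right, h'] at hnj <;> omega
    rcases this with h' | h'
    · rw [s2_eq_zero (n+1) (j+1) (by omega)]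
      push_cast; ring
    · rw [s2_eq_zero (k+1) (j+1) (by omega)]
      push_cast; ring

lemma callan_zero (k : ℕ) (x : ℚ) : callan 0 k x = 1 := by
  unfold callan
  have h1 : stirling2 1 1 = 1 := rfl
  simp [Nat.zero_min, h1, s2_one k]

theorem stmt17 (n k : ℕ) (hk : 0 < k) (x : ℚ) :
    callan n k x =
      (n + 1) * callan n (k - 1) x
        + ∑ j ∈ Finset.Icc 1 (n - 1), (n.choose (j - 1) : ℚ) * callan j (k - 1) x
        + x * ∑ j ∈ Finset.range n, (n.choose j : ℚ) * callan j (k - 1) x := by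
  obtain ⟨K, rfl⟩ : ∃ K, k = K + 1 := ⟨k - 1, by omega⟩
  simp only [Nat.add_sub_cancel]
  cases n with
  | zero =>
    simp [callan_zero]
  | succ N =>
    simp only [Nat.add_sub_cancel]
    -- LHS transformation
    have hrecK : ∀ j : ℕ, (stirling2 (K + 2) (j + 1) : ℚ)
        = ((j:ℚ) + 1) * stirling2 (K + 1) (j + 1) + stirling2 (K + 1) j := by
      intro j
      rw [show K + 2 = (K+1)+1 from rfl, s2_succ_succ]
      push_cast; ring
    have hL : callan (N+1) (K+1) x = ∑ m ∈ range (N+3),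
        ((((m+1).factorial : ℚ) * (∏ i ∈ range m, (x+1+i)) * stirling2 (N+2) (m+1)
          + ((m+1).factorial : ℚ) * (∏ i ∈ range (m+1), (x+1+i)) * stirling2 (N+2) (m+2))
          * stirling2 (K+1) (m+1)) := by
      rw [callan_eq (N+1) (K+1) (N+3) x (by omega)]
      have hsplit : ∀ j : ℕ,
          (j.factorial : ℚ) * (∏ i ∈ range j, (x + 1 + i)) *
            stirling2 (N + 2) (j + 1) * stirling2 (K + 2) (j + 1)
          = (((j:ℚ)+1) * (j.factorial : ℚ) * (∏ i ∈ range j, (x+1+i)) * stirling2 (N+2) (j+1))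
              * stirling2 (K+1) (j+1)
            + ((j.factorial : ℚ) * (∏ i ∈ range j, (x+1+i)) * stirling2 (N+2) (j+1))
              * stirling2 (K+1) j := by
        intro j
        rw [hrecK j]
        ring
      rw [Finset.sum_congr rfl (fun j _ => hsplit j), Finset.sum_add_distrib]
      -- handle the second sum: shift index
      have hB : ∑ j ∈ range (N+3),
          ((j.factorial : ℚ) * (∏ i ∈ range j, (x+1+i)) * stirling2 (N+2) (j+1))
            * stirling2 (K+1) j
          = ∑ m ∈ range (N+3),
            (((m+1).factorial : ℚ) * (∏ i ∈ range (m+1), (x+1+i)) * stirling2 (N+2) (m+2))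
              * stirling2 (K+1) (m+1) := by
        rw [Finset.sum_range_succ' (fun j =>
          ((j.factorial : ℚ) * (∏ i ∈ range j, (x+1+i)) * stirling2 (N+2) (j+1))
            * stirling2 (K+1) j) (N+2)]
        rw [Finset.sum_range_succ (fun i =>
          (((i+1).factorial : ℚ) * (∏ j ∈ range (i+1), (x+1+j)) * stirling2 (N+2) (i+2))
            * stirling2 (K+1) (i+1)) (N+2)]
        rw [s2_zero_right K, s2_eq_zero (N+2) (N+2+2) (by omega)]
        push_cast
        ring
      rw [hB, ← Finset.sum_add_distrib]
      apply Finset.sum_congr rfl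
      intro m _
      have : ((m+1).factorial : ℚ) = ((m:ℚ)+1) * m.factorial := by
        rw [Nat.factorial_succ]; push_cast; ring
      rw [this]
      ring
    rw [hL]
    -- RHS transformation
    have hC : ∀ a, a ≤ N + 1 → callan a K x = ∑ m ∈ range (N+3),
        (m.factorial : ℚ) * (∏ i ∈ range m, (x + 1 + i)) *
          stirling2 (a + 1) (m + 1) * stirling2 (K + 1) (m + 1) :=
      fun a ha => callan_eq a K (N+3) x (by omega)
    have hR1 : ∑ j ∈ Icc 1 N, ((N+1).choose (j-1) : ℚ) * callan j K x
        = ∑ m ∈ range (N+3),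
            ((m.factorial : ℚ) * (∏ i ∈ range m, (x+1+i)) * stirling2 (K+1) (m+1)) *
              (∑ j ∈ Icc 1 N, ((N+1).choose (j-1) : ℚ) * stirling2 (j+1) (m+1)) := by
      have hstep : ∀ j ∈ Icc 1 N, ((N+1).choose (j-1) : ℚ) * callan j K x
          = ∑ m ∈ range (N+3), ((N+1).choose (j-1) : ℚ) *
              ((m.factorial : ℚ) * (∏ i ∈ range m, (x + 1 + i)) *
                stirling2 (j + 1) (m + 1) * stirling2 (K + 1) (m + 1)) := by
        intro j hj
        simp only [Finset.mem_Icc] at hj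
        rw [hC j (by omega)]
        exact Finset.mul_sum _ _ _
      rw [Finset.sum_congr rfl hstep, Finset.sum_comm]
      apply Finset.sum_congr rfl
      intro m _
      rw [Finset.mul_sum]
      exact Finset.sum_congr rfl fun j _ => by ring
    have hR2 : ∑ j ∈ range (N+1), ((N+1).choose j : ℚ) * callan j K x
        = ∑ m ∈ range (N+3),
            ((m.factorial : ℚ) * (∏ i ∈ range m, (x+1+i)) * stirling2 (K+1) (m+1)) *
              (∑ j ∈ range (N+1), ((N+1).choose j : ℚ) * stirling2 (j+1) (m+1)) := by
      have hstep : ∀ j ∈ range (N+1), ((N+1).choose j : ℚ) * callan j K x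
          = ∑ m ∈ range (N+3), ((N+1).choose j : ℚ) *
              ((m.factorial : ℚ) * (∏ i ∈ range m, (x + 1 + i)) *
                stirling2 (j + 1) (m + 1) * stirling2 (K + 1) (m + 1)) := by
        intro j hj
        simp only [Finset.mem_range] at hj
        rw [hC j (by omega)]
        exact Finset.mul_sum _ _ _
      rw [Finset.sum_congr rfl hstep, Finset.sum_comm]
      apply Finset.sum_congr rfl
      intro m _
      rw [Finset.mul_sum]
      exact Finset.sum_congr rfl fun j _ => by ring
    rw [hC (N+1) (by omega), hR1, hR2, Finset.mul_sum, Finset.mul_sum,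
      ← Finset.sum_add_distrib, ← Finset.sum_add_distrib]
    apply Finset.sum_congr rfl
    intro m _
    have hE := keyE N m x
    push_cast at hE ⊢
    linear_combination (stirling2 (K+1) (m+1) : ℚ) * hE
end
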